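/- Let (v_t) be a bounded continuous stationary process with autocorrelation function R(t) = E[v_0 v_t] integrable on [0,∞). Then the limit S(ω) = lim_{T→∞} (1/T) E[|∫₀ᵀ v_t e^{−iωt} dt|²] exists and equals 2 ∫₀^∞ R(t) cos(ωt) dt, provided R is continuous and E[v_s v_t] = R(|t−s|). -/

import Mathlib

open MeasureTheory Set Filter Complex

private lemma integrable_of_bdd' {α : Type*} [MeasurableSpace α] {ν : MeasureTheory.Measure α}
    [MeasureTheory.IsFiniteMeasure ν] {f : α → ℝ} {C : ℝ}
    (hf : Measurable f) (h : ∀ x, |f x| ≤ C) : MeasureTheory.Integrable f ν :=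
  ⟨hf.aestronglyMeasurable, MeasureTheory.HasFiniteIntegral.of_bounded
    (C := C) (Filter.Eventually.of_forall fun x => by simpa using h x)⟩

/-- Power spectral density of a bounded measurable stationary process:
if `E[v_s v_t] = R(|t-s|)` with `R` continuous and integrable on `[0,∞)`, then
`(1/T) E[|∫₀ᵀ v_t e^{-iωt} dt|²] → 2 ∫₀^∞ R(t) cos(ωt) dt` as `T → ∞`. -/
theorem stmt_14 {Ω : Type*} [MeasurableSpace Ω] (μ : Measure Ω) [IsProbabilityMeasure μ]
    (v : ℝ → Ω → ℝ) (hv_meas : Measurable (Function.uncurry v))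
    (M : ℝ) (hv_bdd : ∀ t ω, |v t ω| ≤ M)
    (R : ℝ → ℝ) (hR_cont : Continuous R) (hR_int : IntegrableOn R (Ici 0))
    (hstat : ∀ s t : ℝ, 0 ≤ s → 0 ≤ t → ∫ ω, v s ω * v t ω ∂μ = R |t - s|)
    (w : ℝ) :
    Tendsto (fun T : ℝ =>
        (1 / T) * ∫ ω, ‖∫ t in (0:ℝ)..T, (v t ω : ℂ) * Complex.exp (-(Complex.I * w * t))‖^2 ∂μ)
      atTop (nhds (2 * ∫ t in Ici (0:ℝ), R t * Real.cos (w * t))) := by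
  classical
  -- Ω is nonempty and M ≥ 0
  have hΩ : Nonempty Ω := by
    by_contra h
    rw [not_nonempty_iff] at h
    have h1 : μ univ = 1 := measure_univ
    rw [Set.univ_eq_empty_iff.mpr h, measure_empty] at h1
    exact zero_ne_one h1
  obtain ⟨ω₀⟩ := hΩ
  have hM : 0 ≤ M := (abs_nonneg _).trans (hv_bdd 0 ω₀)
  -- the autocorrelation integrand
  set g : ℝ → ℝ := fun u => R |u| * Real.cos (w * u) with hg_def
  have hg_cont : Continuous g :=
    (hR_cont.comp _root_.continuous_abs).mul (Real.continuous_cos.comp (continuous_const.mul continuous_id'))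
  have hg_int : Integrable g := by
    have h1 : IntegrableOn g (Ici 0) := by
      refine Integrable.mono hR_int hg_cont.aestronglyMeasurable.restrict ?_
      filter_upwards [ae_restrict_mem measurableSet_Ici] with x hx
      have : |x| = x := abs_of_nonneg hx
      simp only [hg_def, Real.norm_eq_abs, this, abs_mul]
      exact mul_le_mul_of_nonneg_left (Real.abs_cos_le_one _) (abs_nonneg _) |>.trans
        (by simp)
    have hgeven : (g ∘ fun x : ℝ => -x) = g := by
      funext x
      simp [hg_def, abs_neg, mul_neg, Real.cos_neg]
    have h2 : IntegrableOn g (Iic 0) := by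
      rw [show (volume : Measure ℝ) = Measure.map (fun x : ℝ => -x) volume from
        (Measure.map_neg_eq_self (volume : Measure ℝ)).symm]
      have m : MeasurableEmbedding fun x : ℝ => -x := (Homeomorph.neg ℝ).measurableEmbedding
      rw [m.integrableOn_map_iff]
      have hpre : (fun x : ℝ => -x) ⁻¹' (Iic 0) = Ici 0 := by
        ext x; simp
      rw [hpre, hgeven]
      exact h1
    have : IntegrableOn g (Iic 0 ∪ Ici 0) := h2.union h1
    rwa [Iic_union_Ici, integrableOn_univ] at this
  -- value of the full-line integral
  have hL : (∫ u, g u) = 2 * ∫ t in Ici (0:ℝ), R t * Real.cos (w * t) := by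
    have hgabs : ∀ u : ℝ, g u = (fun x => R x * Real.cos (w * x)) |u| := by
      intro u
      rcases abs_cases u with ⟨h, _⟩ | ⟨h, _⟩
      · simp [hg_def, h]
      · simp [hg_def, h, mul_neg, Real.cos_neg]
    have h := integral_comp_abs (f := fun x => R x * Real.cos (w * x))
    rw [← integral_Ici_eq_integral_Ioi] at h
    rw [← h]
    refine integral_congr_ae (Eventually.of_forall fun u => ?_)
    rcases abs_cases u with ⟨h1, _⟩ | ⟨h1, _⟩ <;>
      simp [hg_def, h1, mul_neg, Real.cos_neg]
  -- measurability helpers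
  have hvmeas' : ∀ ω, Measurable fun t => v t ω := fun ω =>
    hv_meas.comp (measurable_id.prodMk measurable_const)
  have hc_meas : Measurable fun t : ℝ => Real.cos (w * t) :=
    (Real.continuous_cos.comp (continuous_const.mul continuous_id')).measurable
  have hs_meas : Measurable fun t : ℝ => Real.sin (w * t) :=
    (Real.continuous_sin.comp (continuous_const.mul continuous_id')).measurable
  -- key identity for fixed T > 0
  have key : ∀ T : ℝ, 0 < T →
      (∫ ω, ‖∫ t in (0:ℝ)..T, (v t ω : ℂ) * Complex.exp (-(Complex.I * w * t))‖^2 ∂μ)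
        = ∫ s in (0:ℝ)..T, ∫ u in (-s)..(T - s), g u := by
    intro T hT
    set ν : Measure ℝ := volume.restrict (Ioc 0 T) with hν
    haveI hνfin : IsFiniteMeasure ν := ⟨by
      rw [hν, Measure.restrict_apply_univ]; exact measure_Ioc_lt_top⟩
    -- per-ω integrability of integrands
    have hIf : ∀ (ω) (c : ℝ → ℝ), Measurable c → (∀ t, |c t| ≤ 1) →
        Integrable (fun t => v t ω * c t) ν := by
      intro ω c hcm hc1
      refine integrable_of_bdd' ((hvmeas' ω).mul hcm) (C := M) fun t => ?_
      calc |v t ω * c t| = |v t ω| * |c t| := abs_mul _ _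
        _ ≤ M * 1 := mul_le_mul (hv_bdd _ _) (hc1 t) (abs_nonneg _) hM
        _ = M := mul_one M
    -- Step A: expand the squared norm
    have hA : ∀ ω, ‖∫ t in (0:ℝ)..T, (v t ω : ℂ) * Complex.exp (-(Complex.I * w * t))‖^2
        = (∫ t, v t ω * Real.cos (w * t) ∂ν)^2 + (∫ t, v t ω * Real.sin (w * t) ∂ν)^2 := by
      intro ω
      have h1 : ∀ t : ℝ, (v t ω : ℂ) * Complex.exp (-(Complex.I * w * t))
          = ((v t ω * Real.cos (w * t) : ℝ) : ℂ)
            + ((-(v t ω * Real.sin (w * t)) : ℝ) : ℂ) * Complex.I := by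
        intro t
        have he : -(Complex.I * w * t) = ((-(w * t) : ℝ) : ℂ) * Complex.I := by
          push_cast; ring
        rw [he, Complex.exp_mul_I, ← Complex.ofReal_cos, ← Complex.ofReal_sin,
          Real.cos_neg, Real.sin_neg]
        push_cast
        ring
      have hi1 : IntervalIntegrable (fun t => ((v t ω * Real.cos (w * t) : ℝ) : ℂ)) volume 0 T := by
        rw [intervalIntegrable_iff_integrableOn_Ioc_of_le hT.le]
        exact (hIf ω _ hc_meas fun t => Real.abs_cos_le_one _).ofReal
      have hi2 : IntervalIntegrable
          (fun t => ((-(v t ω * Real.sin (w * t)) : ℝ) : ℂ) * Complex.I) volume 0 T := by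
        rw [intervalIntegrable_iff_integrableOn_Ioc_of_le hT.le]
        exact (((hIf ω _ hs_meas fun t => Real.abs_sin_le_one _).neg).ofReal).mul_const _
      rw [intervalIntegral.integral_congr (fun t _ => h1 t),
        intervalIntegral.integral_add hi1 hi2, intervalIntegral.integral_mul_const,
        intervalIntegral.integral_ofReal, intervalIntegral.integral_ofReal,
        Complex.sq_norm, Complex.normSq_add_mul_I,
        intervalIntegral.integral_of_le hT.le, intervalIntegral.integral_of_le hT.le,
        integral_neg]
      rw [neg_sq]
    -- Step B: square of integral as double integral
    have hB : ∀ ω, (∫ t, v t ω * Real.cos (w * t) ∂ν)^2 + (∫ t, v t ω * Real.sin (w * t) ∂ν)^2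
        = ∫ p, v p.1 ω * v p.2 ω * Real.cos (w * (p.2 - p.1)) ∂(ν.prod ν) := by
      intro ω
      have e1 := MeasureTheory.integral_prod_mul (μ := ν) (ν := ν)
        (fun t => v t ω * Real.cos (w * t)) (fun t => v t ω * Real.cos (w * t))
      have e2 := MeasureTheory.integral_prod_mul (μ := ν) (ν := ν)
        (fun t => v t ω * Real.sin (w * t)) (fun t => v t ω * Real.sin (w * t))
      have hm1 : Measurable fun p : ℝ × ℝ =>
          (v p.1 ω * Real.cos (w * p.1)) * (v p.2 ω * Real.sin (w * p.2)) := by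
        exact (((hvmeas' ω).comp measurable_fst).mul (hc_meas.comp measurable_fst)).mul
          (((hvmeas' ω).comp measurable_snd).mul (hs_meas.comp measurable_snd))
      have hbd : ∀ (c1 c2 : ℝ → ℝ), (∀ t, |c1 t| ≤ 1) → (∀ t, |c2 t| ≤ 1) → ∀ p : ℝ × ℝ,
          |(v p.1 ω * c1 p.1) * (v p.2 ω * c2 p.2)| ≤ M * M := by
        intro c1 c2 h1 h2 p
        rw [abs_mul]
        have b1 : |v p.1 ω * c1 p.1| ≤ M := by
          rw [abs_mul]
          calc |v p.1 ω| * |c1 p.1| ≤ M * 1 :=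
            mul_le_mul (hv_bdd _ _) (h1 _) (abs_nonneg _) hM
          _ = M := mul_one M
        have b2 : |v p.2 ω * c2 p.2| ≤ M := by
          rw [abs_mul]
          calc |v p.2 ω| * |c2 p.2| ≤ M * 1 :=
            mul_le_mul (hv_bdd _ _) (h2 _) (abs_nonneg _) hM
          _ = M := mul_one M
        exact mul_le_mul b1 b2 (abs_nonneg _) hM
      have hint1 : Integrable (fun p : ℝ × ℝ =>
          (v p.1 ω * Real.cos (w * p.1)) * (v p.2 ω * Real.cos (w * p.2))) (ν.prod ν) := by
        refine integrable_of_bdd' ?_ (hbd _ _ (fun t => Real.abs_cos_le_one _)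
          (fun t => Real.abs_cos_le_one _))
        exact (((hvmeas' ω).comp measurable_fst).mul (hc_meas.comp measurable_fst)).mul
          (((hvmeas' ω).comp measurable_snd).mul (hc_meas.comp measurable_snd))
      have hint2 : Integrable (fun p : ℝ × ℝ =>
          (v p.1 ω * Real.sin (w * p.1)) * (v p.2 ω * Real.sin (w * p.2))) (ν.prod ν) := by
        refine integrable_of_bdd' ?_ (hbd _ _ (fun t => Real.abs_sin_le_one _)
          (fun t => Real.abs_sin_le_one _))
        exact (((hvmeas' ω).comp measurable_fst).mul (hs_meas.comp measurable_fst)).mul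
          (((hvmeas' ω).comp measurable_snd).mul (hs_meas.comp measurable_snd))
      rw [sq, sq, ← e1, ← e2, ← integral_add hint1 hint2]
      refine integral_congr_ae (Eventually.of_forall fun p => ?_)
      dsimp only
      have : w * (p.2 - p.1) = w * p.2 - w * p.1 := by ring
      rw [this, Real.cos_sub]
      ring
    -- Step C: swap integration order and use stationarity
    have hq_int : Integrable (Function.uncurry fun (ω : Ω) (p : ℝ × ℝ) =>
        v p.1 ω * v p.2 ω * Real.cos (w * (p.2 - p.1))) (μ.prod (ν.prod ν)) := by
      refine integrable_of_bdd' ?_ (C := M * M) ?_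
      · have m1 : Measurable fun z : Ω × (ℝ × ℝ) => v z.2.1 z.1 :=
          hv_meas.comp ((measurable_fst.comp measurable_snd).prodMk measurable_fst)
        have m2 : Measurable fun z : Ω × (ℝ × ℝ) => v z.2.2 z.1 :=
          hv_meas.comp ((measurable_snd.comp measurable_snd).prodMk measurable_fst)
        have m3 : Measurable fun z : Ω × (ℝ × ℝ) => Real.cos (w * (z.2.2 - z.2.1)) :=
          (Real.continuous_cos.measurable).comp
            ((measurable_const.mul ((measurable_snd.comp measurable_snd).sub
              (measurable_fst.comp measurable_snd))))
        exact (m1.mul m2).mul m3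
      · rintro ⟨ω', p⟩
        simp only [Function.uncurry_apply_pair]
        rw [abs_mul, abs_mul]
        calc |v p.1 ω'| * |v p.2 ω'| * |Real.cos (w * (p.2 - p.1))|
            ≤ (M * M) * 1 := by
              refine mul_le_mul ?_ (Real.abs_cos_le_one _) (abs_nonneg _)
                (mul_nonneg hM hM)
              exact mul_le_mul (hv_bdd _ _) (hv_bdd _ _) (abs_nonneg _) hM
          _ = M * M := mul_one _
    have hC : (∫ ω, ∫ p, v p.1 ω * v p.2 ω * Real.cos (w * (p.2 - p.1)) ∂(ν.prod ν) ∂μ)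
        = ∫ p, g (p.2 - p.1) ∂(ν.prod ν) := by
      rw [MeasureTheory.integral_integral_swap hq_int]
      refine integral_congr_ae ?_
      have hprod : ν.prod ν = (volume.prod volume).restrict ((Ioc 0 T) ×ˢ (Ioc 0 T)) := by
        rw [hν, Measure.prod_restrict]
      rw [hprod]
      filter_upwards [ae_restrict_mem (measurableSet_Ioc.prod measurableSet_Ioc)] with p hp
      obtain ⟨hp1, hp2⟩ := hp
      rw [MeasureTheory.integral_mul_const, hstat _ _ hp1.1.le hp2.1.le]
    -- Step D: reduce double integral to iterated interval integrals
    have hgp_int : Integrable (fun p : ℝ × ℝ => g (p.2 - p.1)) (ν.prod ν) := by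
      have hcont : Continuous fun p : ℝ × ℝ => g (p.2 - p.1) :=
        hg_cont.comp (continuous_snd.sub continuous_fst)
      have hK : IsCompact ((Icc (0:ℝ) T) ×ˢ (Icc (0:ℝ) T)) :=
        isCompact_Icc.prod isCompact_Icc
      have h1 : IntegrableOn (fun p : ℝ × ℝ => g (p.2 - p.1))
          ((Icc (0:ℝ) T) ×ˢ (Icc (0:ℝ) T)) (volume.prod volume) := by
        rw [← Measure.volume_eq_prod]
        exact hcont.continuousOn.integrableOn_compact hK
      have h2 : IntegrableOn (fun p : ℝ × ℝ => g (p.2 - p.1))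
          ((Ioc (0:ℝ) T) ×ˢ (Ioc (0:ℝ) T)) (volume.prod volume) :=
        h1.mono_set (prod_mono Ioc_subset_Icc_self Ioc_subset_Icc_self)
      rw [hν, Measure.prod_restrict]
      exact h2
    have hD : (∫ p, g (p.2 - p.1) ∂(ν.prod ν)) = ∫ s in (0:ℝ)..T, ∫ u in (-s)..(T - s), g u := by
      rw [MeasureTheory.integral_prod _ hgp_int]
      have inner : ∀ s : ℝ, (∫ t, g (t - s) ∂ν) = ∫ u in (-s)..(T - s), g u := by
        intro s
        rw [hν, ← intervalIntegral.integral_of_le hT.le,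
          intervalIntegral.integral_comp_sub_right (fun u => g u) s, zero_sub]
      simp_rw [inner]
      rw [hν, ← intervalIntegral.integral_of_le hT.le]
    calc (∫ ω, ‖∫ t in (0:ℝ)..T, (v t ω : ℂ) * Complex.exp (-(Complex.I * w * t))‖^2 ∂μ)
        = ∫ ω, ∫ p, v p.1 ω * v p.2 ω * Real.cos (w * (p.2 - p.1)) ∂(ν.prod ν) ∂μ := by
          refine integral_congr_ae (Eventually.of_forall fun ω => ?_)
          dsimp only
          rw [hA ω, hB ω]
      _ = ∫ p, g (p.2 - p.1) ∂(ν.prod ν) := hC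
      _ = ∫ s in (0:ℝ)..T, ∫ u in (-s)..(T - s), g u := hD
  -- the dominated-convergence limit
  have hmain : Tendsto (fun T : ℝ => ∫ x in Ioc (0:ℝ) 1, ∫ u in (-(T * x))..(T - T * x), g u)
      atTop (nhds (∫ u, g u)) := by
    haveI : IsFiniteMeasure (volume.restrict (Ioc (0:ℝ) 1)) := ⟨by
      rw [Measure.restrict_apply_univ]; exact measure_Ioc_lt_top⟩
    have hprim : Continuous fun y : ℝ => ∫ u in (0:ℝ)..y, g u :=
      intervalIntegral.continuous_primitive (fun a b => hg_int.intervalIntegrable) 0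
    have hsplit : ∀ a b : ℝ, (∫ u in a..b, g u)
        = (∫ u in (0:ℝ)..b, g u) - ∫ u in (0:ℝ)..a, g u :=
      fun a b => (intervalIntegral.integral_interval_sub_left
        hg_int.intervalIntegrable hg_int.intervalIntegrable).symm
    have := MeasureTheory.tendsto_integral_filter_of_dominated_convergence
      (μ := volume.restrict (Ioc (0:ℝ) 1)) (l := (atTop : Filter ℝ))
      (F := fun T x => ∫ u in (-(T * x))..(T - T * x), g u)
      (f := fun _ => ∫ u, g u) (bound := fun _ => ∫ u, ‖g u‖)
      (by
        refine Eventually.of_forall fun T => ?_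
        have hcont : Continuous fun x : ℝ => ∫ u in (-(T * x))..(T - T * x), g u := by
          have heq : (fun x : ℝ => ∫ u in (-(T * x))..(T - T * x), g u)
              = fun x => (∫ u in (0:ℝ)..(T - T * x), g u) - ∫ u in (0:ℝ)..(-(T * x)), g u :=
            funext fun x => hsplit _ _
          rw [heq]
          exact (hprim.comp (continuous_const.sub (continuous_const.mul continuous_id'))).sub
            (hprim.comp ((continuous_const.mul continuous_id').neg))
        exact hcont.aestronglyMeasurable.restrict)
      (by
        filter_upwards [eventually_ge_atTop (0:ℝ)] with T hT0
        refine Eventually.of_forall fun x => ?_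
        have hab : -(T * x) ≤ T - T * x := by linarith
        calc ‖∫ u in (-(T * x))..(T - T * x), g u‖
            ≤ ∫ u in (-(T * x))..(T - T * x), ‖g u‖ :=
              intervalIntegral.norm_integral_le_integral_norm hab
          _ = ∫ u in Ioc (-(T * x)) (T - T * x), ‖g u‖ :=
              intervalIntegral.integral_of_le hab
          _ ≤ ∫ u, ‖g u‖ := setIntegral_le_integral hg_int.norm
              (Eventually.of_forall fun u => norm_nonneg _))
      (integrable_const _)
      (by
        have h2 : ∀ᵐ x : ℝ ∂volume.restrict (Ioc (0:ℝ) 1), x ≠ 1 := by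
          refine ae_restrict_of_ae ?_
          rw [ae_iff]
          have : {x : ℝ | ¬x ≠ 1} = {1} := by ext x; simp
          rw [this]
          exact measure_singleton 1
        filter_upwards [ae_restrict_mem measurableSet_Ioc, h2] with x hx hne
        have hx1 : x < 1 := lt_of_le_of_ne hx.2 hne
        refine intervalIntegral_tendsto_integral hg_int ?_ ?_
        · exact tendsto_neg_atTop_atBot.comp (tendsto_id.atTop_mul_const hx.1)
        · have : (fun T : ℝ => T - T * x) = fun T : ℝ => T * (1 - x) :=
            funext fun T => by ring
          rw [this]
          exact tendsto_id.atTop_mul_const (by linarith))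
    have hone : (∫ _x in Ioc (0:ℝ) 1, (∫ u, g u) ∂volume) = ∫ u, g u := by
      rw [setIntegral_const]
      rw [Real.volume_real_Ioc]
      norm_num
    rwa [hone] at this
  -- conclude
  rw [← hL]
  refine Tendsto.congr' ?_ hmain
  filter_upwards [eventually_gt_atTop (0:ℝ)] with T hT
  rw [key T hT]
  have hsub := intervalIntegral.integral_comp_mul_left
    (f := fun s => ∫ u in (-s)..(T - s), g u) (a := (0:ℝ)) (b := 1) (c := T) hT.ne'
  rw [← intervalIntegral.integral_of_le (zero_le_one), hsub, mul_zero, mul_one,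
    smul_eq_mul, one_div]
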